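/- Let A be a C*-algebra and T a regular operator on A (viewed as a Hilbert module over itself) such that I + T*T has full range. Then for any representation π of A, the fiber operator T_π satisfies: the range of I + T_π* T_π contains π(A); in particular if ran(I+T*T) = A then ran(I + T_π*T_π) = π(A). -/
import Mathlib

/-- Let `T` be a regular operator on a C*-algebra `A` (Hilbert module over itself)
with adjoint `T*` and `ran (I + T*T) = A`.  Then for any representation `π` of `A`, the range of
`I + T_π* T_π` contains `π(A)`: every `π b` can be written `π a + c` where `a ∈ D(T)` and `c`
(namely `c = π (T*(T a)) ∈ π(A)`) satisfies the defining adjoint relation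
`(π (T x))* (π (T a)) = (π x)* c` for all `x ∈ D(T)`, i.e. `c = T_π*(T_π (π a))`. -/
theorem stmt_9 {A : Type*} [NonUnitalCStarAlgebra A]
    {Hπ : Type*} [NormedAddCommGroup Hπ] [InnerProductSpace ℂ Hπ] [CompleteSpace Hπ]
    (D : Submodule ℂ A) (hD : Dense (D : Set A))
    (Ds : Submodule ℂ A) (hDs : Dense (Ds : Set A))
    (T : D →ₗ[ℂ] A) (Ts : Ds →ₗ[ℂ] A)
    (hadj : ∀ (a : D) (c : Ds), star (T a) * (c : A) = star (a : A) * Ts c)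
    (hran : ∀ b : A, ∃ (a : D) (h : T a ∈ Ds), (a : A) + Ts ⟨T a, h⟩ = b)
    (π : A →⋆ₙₐ[ℂ] (Hπ →L[ℂ] Hπ)) :
    ∀ b : A, ∃ (a : D) (c : Hπ →L[ℂ] Hπ), c ∈ Set.range π ∧
      (∀ x : D, star (π (T x)) * π (T a) = star (π (x : A)) * c) ∧
      π (a : A) + c = π b := by
  intro b
  obtain ⟨a, h, hab⟩ := hran b
  refine ⟨a, π (Ts ⟨T a, h⟩), ⟨_, rfl⟩, ?_, ?_⟩
  · intro x
    have := hadj x ⟨T a, h⟩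
    calc star (π (T x)) * π (T a) = π (star (T x) * (T a)) := by
          rw [map_mul, map_star]
      _ = π (star (x : A) * Ts ⟨T a, h⟩) := by rw [this]
      _ = star (π (x : A)) * π (Ts ⟨T a, h⟩) := by rw [map_mul, map_star]
  · rw [← map_add, hab]
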